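/- Suppose d_1(x), ..., d_m(x) are polynomials over ℝ with coefficients in {0,1}, each with constant coefficient 1, and ∏_{i=1}^m d_i(x) = ∑_{s=0}^{t} x^s. Then for each s with 1 ≤ s ≤ t, at most one d_i has a nonzero coefficient of x^s. -/
import Mathlib


open Polynomial Finset

private lemma coeff_mul_le' {p q : ℝ[X]} (hp : ∀ k, 0 ≤ p.coeff k)
    (hq : ∀ k, 0 ≤ q.coeff k) (a b : ℕ) :
    p.coeff a * q.coeff b ≤ (p * q).coeff (a + b) := by
  rw [coeff_mul]
  have hmem : ((a, b) : ℕ × ℕ) ∈ antidiagonal (a + b) := by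
    simp [Finset.mem_antidiagonal]
  exact Finset.single_le_sum (f := fun x : ℕ × ℕ => p.coeff x.1 * q.coeff x.2)
    (fun x _ => mul_nonneg (hp _) (hq _)) hmem

theorem uniqueness_of_terms (m t : ℕ) (d : Fin m → ℝ[X])
    (hcoeff : ∀ i k, (d i).coeff k = 0 ∨ (d i).coeff k = 1)
    (h0 : ∀ i, (d i).coeff 0 = 1)
    (hprod : ∏ i, d i = ∑ s ∈ Finset.range (t + 1), (X : ℝ[X]) ^ s) :
    ∀ s, 1 ≤ s → s ≤ t → ∀ i j, (d i).coeff s ≠ 0 → (d j).coeff s ≠ 0 → i = j := by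
  intro s hs1 hs2 i j hi hj
  by_contra hne
  have his : (d i).coeff s = 1 := (hcoeff i s).resolve_left hi
  have hjs : (d j).coeff s = 1 := (hcoeff j s).resolve_left hj
  have hnn : ∀ i k, 0 ≤ (d i).coeff k := by
    intro i k; rcases hcoeff i k with h | h <;> simp [h]
  set P := ∏ k ∈ ((univ.erase i).erase j), d k with hP
  have hPnn : ∀ k, 0 ≤ P.coeff k := by
    have := Finset.prod_induction (s := (univ.erase i).erase j) d
      (fun p => ∀ k, 0 ≤ p.coeff k)
      (fun p q hp hq k => by
        rw [coeff_mul]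
        exact Finset.sum_nonneg fun x _ => mul_nonneg (hp _) (hq _))
      (fun k => by simp [coeff_one]; split <;> norm_num)
      (fun k _ => hnn k)
    exact this
  have hP0 : P.coeff 0 = 1 := by
    have he : ∀ k : Fin m, (d k).eval 0 = 1 := fun k => by
      rw [← coeff_zero_eq_eval_zero]; exact h0 k
    simp [hP, coeff_zero_eq_eval_zero, eval_prod, he]
  have hjmem : j ∈ univ.erase i := Finset.mem_erase.mpr ⟨fun h => hne h.symm, mem_univ j⟩
  have hsplit : ∏ k, d k = d i * (d j * P) := by
    rw [hP, Finset.mul_prod_erase _ d hjmem, Finset.mul_prod_erase _ d (mem_univ i)]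
  have hQnn : ∀ k, 0 ≤ (d j * P).coeff k := by
    intro k
    rw [coeff_mul]
    exact Finset.sum_nonneg fun x _ => mul_nonneg (hnn j _) (hPnn _)
  have hQ0 : (d j * P).coeff 0 = 1 := by
    rw [mul_coeff_zero, h0 j, hP0, one_mul]
  have hQs : (1 : ℝ) ≤ (d j * P).coeff s := by
    have := coeff_mul_le' (hnn j) hPnn s 0
    simpa [hjs, hP0] using this
  have hprodcoeff : (∏ k, d k).coeff s = 1 := by
    rw [hprod, finset_sum_coeff]
    simp only [coeff_X_pow]
    rw [Finset.sum_ite_eq (Finset.range (t + 1)) s (fun _ => (1 : ℝ))]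
    simp [Nat.lt_succ_of_le hs2]
  have key : (2 : ℝ) ≤ (∏ k, d k).coeff s := by
    rw [hsplit, coeff_mul]
    have hne2 : ((s, 0) : ℕ × ℕ) ≠ (0, s) := by
      intro h; simp at h; omega
    have hsub : ({(s, 0), (0, s)} : Finset (ℕ × ℕ)) ⊆ antidiagonal s := by
      intro x hx
      simp only [Finset.mem_insert, Finset.mem_singleton] at hx
      rcases hx with rfl | rfl <;> simp [Finset.mem_antidiagonal]
    have hpair : (2 : ℝ) ≤ ∑ x ∈ ({(s, 0), (0, s)} : Finset (ℕ × ℕ)),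
        (d i).coeff x.1 * (d j * P).coeff x.2 := by
      rw [Finset.sum_pair hne2]
      simp only [his, h0 i, hQ0, one_mul, mul_one]
      linarith
    refine le_trans hpair (Finset.sum_le_sum_of_subset_of_nonneg hsub ?_)
    exact fun x _ _ => mul_nonneg (hnn i _) (hQnn _)
  rw [hprodcoeff] at key
  linarith
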